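/- Let x³ + 12t ≠ 0 at a point (x,t) ∈ ℝ×ℝ. Then the rational function u(x,t) = (6x⁴ − 144xt)/(x³ + 12t)², which equals −2 ∂_x² ln W(φ₀,φ₁) with φ₀ = x and φ₁ = x³/6 − 4t, satisfies the KdV equation u_t − 6 u u_x + u_{xxx} = 0 at every point where x³ + 12t ≠ 0. -/

import Mathlib

private lemma adjust {f g : ℝ → ℝ} {a b x : ℝ} (hf : HasDerivAt f a x)
    (hfg : ∀ y, g y = f y) (hab : b = a) : HasDerivAt g b x := by
  subst hab
  exact hf.congr_of_eventuallyEq (Filter.EventuallyEq.of_eq (funext hfg))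

private lemma hDx (t x : ℝ) : HasDerivAt (fun x : ℝ => x^3 + 12*t) (3*x^2) x := by
  simpa using (hasDerivAt_pow 3 x).add_const (12*t)

private lemma L1 (t x : ℝ) (h : x^3 + 12*t ≠ 0) :
    HasDerivAt (fun x : ℝ => (6*x^4 - 144*x*t)/(x^3+12*t)^2)
      ((-12*x^6 + 1008*x^3*t - 1728*t^2)/(x^3+12*t)^3) x := by
  have hD2 : HasDerivAt (fun x : ℝ => (x^3+12*t)^2) (2*(x^3+12*t)*(3*x^2)) x := by
    simpa using (hDx t x).fun_pow 2
  have hN : HasDerivAt (fun x : ℝ => 6*x^4 - 144*x*t) (24*x^3 - 144*t) x := by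
    exact adjust (((hasDerivAt_pow 4 x).const_mul (6:ℝ)).sub
      (((hasDerivAt_id x).const_mul (144:ℝ)).mul_const t))
      (fun y => by simp only [id_eq, Pi.sub_apply]; try ring) (by push_cast; ring)
  have h3 := hN.fun_div hD2 (pow_ne_zero 2 h)
  refine h3.congr_deriv ?_
  field_simp
  try ring

private lemma L2 (t x : ℝ) (h : x^3 + 12*t ≠ 0) :
    HasDerivAt (fun x : ℝ => (-12*x^6 + 1008*x^3*t - 1728*t^2)/(x^3+12*t)^3)
      ((36*x^8 - 6912*x^5*t + 51840*x^2*t^2)/(x^3+12*t)^4) x := by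
  have hD3 : HasDerivAt (fun x : ℝ => (x^3+12*t)^3) (3*(x^3+12*t)^2*(3*x^2)) x := by
    simpa using (hDx t x).fun_pow 3
  have hN : HasDerivAt (fun x : ℝ => -12*x^6 + 1008*x^3*t - 1728*t^2)
      (-72*x^5 + 3024*x^2*t) x := by
    exact adjust ((((hasDerivAt_pow 6 x).const_mul (-12:ℝ)).add
      (((hasDerivAt_pow 3 x).const_mul (1008:ℝ)).mul_const t)).sub_const (1728*t^2))
      (fun y => by simp only [Pi.add_apply, Pi.sub_apply]) (by push_cast; ring)
  have h3 := hN.fun_div hD3 (pow_ne_zero 3 h)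
  refine h3.congr_deriv ?_
  field_simp
  try ring

private lemma L3 (t x : ℝ) (h : x^3 + 12*t ≠ 0) :
    HasDerivAt (fun x : ℝ => (36*x^8 - 6912*x^5*t + 51840*x^2*t^2)/(x^3+12*t)^4)
      ((-144*x^10 + 51840*x^7*t - 933120*x^4*t^2 + 1244160*x*t^3)/(x^3+12*t)^5) x := by
  have hD4 : HasDerivAt (fun x : ℝ => (x^3+12*t)^4) (4*(x^3+12*t)^3*(3*x^2)) x := by
    simpa using (hDx t x).fun_pow 4
  have hN : HasDerivAt (fun x : ℝ => 36*x^8 - 6912*x^5*t + 51840*x^2*t^2)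
      (288*x^7 - 34560*x^4*t + 103680*x*t^2) x := by
    exact adjust ((((hasDerivAt_pow 8 x).const_mul (36:ℝ)).sub
      (((hasDerivAt_pow 5 x).const_mul (6912:ℝ)).mul_const t)).add
      (((hasDerivAt_pow 2 x).const_mul (51840:ℝ)).mul_const (t^2)))
      (fun y => by simp only [Pi.add_apply, Pi.sub_apply]) (by push_cast; ring)
  have h3 := hN.fun_div hD4 (pow_ne_zero 4 h)
  refine h3.congr_deriv ?_
  field_simp
  try ring

private lemma Lt (x t : ℝ) (h : x^3 + 12*t ≠ 0) :
    HasDerivAt (fun t : ℝ => (6*x^4 - 144*x*t)/(x^3+12*t)^2)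
      ((-288*x^4 + 1728*x*t)/(x^3+12*t)^3) t := by
  have hd : HasDerivAt (fun t : ℝ => x^3 + 12*t) 12 t := by
    simpa using ((hasDerivAt_id t).const_mul (12:ℝ)).const_add (x^3)
  have hD2 : HasDerivAt (fun t : ℝ => (x^3+12*t)^2) (2*(x^3+12*t)*12) t := by
    simpa using hd.fun_pow 2
  have hN : HasDerivAt (fun t : ℝ => 6*x^4 - 144*x*t) (-(144*x)) t := by
    exact adjust ((((hasDerivAt_id t).const_mul (144*x))).const_sub (6*x^4))
      (fun y => by simp only [id_eq]; try ring) (by ring)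
  have h3 := hN.fun_div hD2 (pow_ne_zero 2 h)
  refine h3.congr_deriv ?_
  field_simp
  try ring

/-- Partial derivative with respect to the first variable `x`. -/
noncomputable def px (f : ℝ × ℝ → ℝ) : ℝ × ℝ → ℝ :=
  fun p => deriv (fun x => f (x, p.2)) p.1

/-- Partial derivative with respect to the second variable `t`. -/
noncomputable def pt (f : ℝ × ℝ → ℝ) : ℝ × ℝ → ℝ :=
  fun p => deriv (fun t => f (p.1, t)) p.2

/-- The Wronskian determinant in the `x`-variable of `N` functions of `(x,t)`. -/
noncomputable def wronskian (N : ℕ) (φ : Fin N → ℝ × ℝ → ℝ) (p : ℝ × ℝ) : ℝ :=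
  Matrix.det (Matrix.of fun i j : Fin N => (px^[(j : ℕ)] (φ i)) p)

/-- The rational solution `u = (6x⁴ − 144xt)/(x³ + 12t)²` equals
`−2∂ₓ² ln W(φ₀, φ₁)` with `φ₀ = x`, `φ₁ = x³/6 − 4t`, and satisfies the KdV equation
`u_t − 6uu_x + u_{xxx} = 0` wherever `x³ + 12t ≠ 0`. -/
theorem rational_solution_order_one
    (u g : ℝ × ℝ → ℝ)
    (hu : ∀ p : ℝ × ℝ, u p = (6 * p.1 ^ 4 - 144 * p.1 * p.2) / (p.1 ^ 3 + 12 * p.2) ^ 2)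
    (hg : ∀ p : ℝ × ℝ,
      g p = wronskian 2 ![fun q : ℝ × ℝ => q.1, fun q : ℝ × ℝ => q.1 ^ 3 / 6 - 4 * q.2] p) :
    ∀ p : ℝ × ℝ, p.1 ^ 3 + 12 * p.2 ≠ 0 →
      (u p = -2 * (g p * (px^[2] g) p - (px g p) ^ 2) / (g p) ^ 2) ∧
      (pt u p - 6 * u p * px u p + (px^[3] u) p = 0) := by
  -- explicit formula for g
  have hg' : ∀ p : ℝ × ℝ, g p = p.1^3/3 + 4*p.2 := by
    intro p
    rw [hg, wronskian, Matrix.det_fin_two]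
    have e1 : px (fun q : ℝ × ℝ => q.1) p = 1 := by
      simp [px]
    have e2 : px (fun q : ℝ × ℝ => q.1^3/6 - 4*q.2) p = p.1^2/2 := by
      have hh : HasDerivAt (fun x : ℝ => x^3/6 - 4*p.2) (p.1^2/2) p.1 := by
        exact adjust (((hasDerivAt_pow 3 p.1).div_const 6).sub_const (4*p.2))
          (fun y => by ring) (by push_cast; ring)
      simpa [px] using hh.deriv
    simp [Matrix.of_apply, Matrix.cons_val_zero, Matrix.cons_val_one, Matrix.head_cons, e1, e2]
    ring
  have hpxg : ∀ p : ℝ × ℝ, px g p = p.1^2 := by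
    intro p
    show deriv (fun z => g (z, p.2)) p.1 = p.1^2
    rw [show (fun z : ℝ => g (z, p.2)) = fun z => z^3/3 + 4*p.2 from
      funext fun z => hg' (z, p.2)]
    have hh : HasDerivAt (fun z : ℝ => z^3/3 + 4*p.2) (p.1^2) p.1 := by
      exact adjust (((hasDerivAt_pow 3 p.1).div_const 3).add_const (4*p.2))
        (fun y => by ring) (by push_cast; ring)
    exact hh.deriv
  have hpxg2 : ∀ p : ℝ × ℝ, (px^[2] g) p = 2*p.1 := by
    intro p
    show deriv (fun z => px g (z, p.2)) p.1 = 2*p.1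
    rw [show (fun z : ℝ => px g (z, p.2)) = fun z => z^2 from
      funext fun z => hpxg (z, p.2)]
    have hh : HasDerivAt (fun z : ℝ => z^2) (2*p.1) p.1 := by
      simpa using hasDerivAt_pow 2 p.1
    exact hh.deriv
  rintro ⟨x, t⟩ hp
  have hp' : x^3 + 12*t ≠ 0 := hp
  have hcont : Continuous fun y : ℝ => y^3 + 12*t := by continuity
  have hopen : IsOpen {y : ℝ | y^3 + 12*t ≠ 0} := isOpen_compl_singleton.preimage hcont
  -- slice of u
  have hus : (fun z : ℝ => u (z, t)) = fun z => (6*z^4 - 144*z*t)/(z^3+12*t)^2 := by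
    funext z
    rw [hu (z, t)]
  have h1 : ∀ y : ℝ, y^3 + 12*t ≠ 0 →
      px u (y, t) = (-12*y^6 + 1008*y^3*t - 1728*t^2)/(y^3+12*t)^3 := by
    intro y hy
    show deriv (fun z => u (z, t)) y = _
    rw [hus]
    exact (L1 t y hy).deriv
  have h2 : ∀ y : ℝ, y^3 + 12*t ≠ 0 →
      (px^[2] u) (y, t) = (36*y^8 - 6912*y^5*t + 51840*y^2*t^2)/(y^3+12*t)^4 := by
    intro y hy
    have hev : (fun z : ℝ => px u (z, t)) =ᶠ[nhds y]
        (fun z => (-12*z^6 + 1008*z^3*t - 1728*t^2)/(z^3+12*t)^3) := by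
      filter_upwards [hopen.mem_nhds hy] with z hz using h1 z hz
    show deriv (fun z => px u (z, t)) y = _
    rw [hev.deriv_eq]
    exact (L2 t y hy).deriv
  have h3 : ∀ y : ℝ, y^3 + 12*t ≠ 0 →
      (px^[3] u) (y, t) =
        (-144*y^10 + 51840*y^7*t - 933120*y^4*t^2 + 1244160*y*t^3)/(y^3+12*t)^5 := by
    intro y hy
    have hev : (fun z : ℝ => (px^[2] u) (z, t)) =ᶠ[nhds y]
        (fun z => (36*z^8 - 6912*z^5*t + 51840*z^2*t^2)/(z^3+12*t)^4) := by
      filter_upwards [hopen.mem_nhds hy] with z hz using h2 z hz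
    show deriv (fun z => (px^[2] u) (z, t)) y = _
    rw [hev.deriv_eq]
    exact (L3 t y hy).deriv
  have hptu : pt u (x, t) = (-288*x^4 + 1728*x*t)/(x^3+12*t)^3 := by
    show deriv (fun s => u (x, s)) t = _
    rw [show (fun s : ℝ => u (x, s)) = fun s => (6*x^4 - 144*x*s)/(x^3+12*s)^2 from
      funext fun s => hu (x, s)]
    exact (Lt x t hp').deriv
  constructor
  · rw [hu, hg', hpxg, hpxg2]
    show (6*x^4 - 144*x*t)/(x^3+12*t)^2 = -2*((x^3/3+4*t)*(2*x) - (x^2)^2)/(x^3/3+4*t)^2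
    rw [show (x:ℝ)^3/3+4*t = (x^3+12*t)/3 from by ring, div_pow]
    field_simp
    ring
  · rw [hu, hptu, h1 x hp', h3 x hp']
    have : (6 * (x, t).1 ^ 4 - 144 * (x, t).1 * (x, t).2) / ((x, t).1 ^ 3 + 12 * (x, t).2) ^ 2
        = (6*x^4 - 144*x*t)/(x^3+12*t)^2 := rfl
    rw [this]
    field_simp
    ring
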